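/- Let A be an n×n real matrix with nonnegative entries such that every column sum is at most one (Σ_i A_{i,e} ≤ 1 for every column index e), and suppose that for every index j there exists a finite sequence of indices j = e_0, e_1, …, e_r with A_{e_{m+1}, e_m} > 0 for every m < r and with Σ_i A_{i, e_r} < 1. Then the spectral radius of A is strictly less than 1; equivalently, every complex eigenvalue of A has modulus strictly less than 1. -/

import Mathlib

section aux

variable {n : ℕ} (A : Matrix (Fin n) (Fin n) ℝ)

lemma rm_pow_nonneg (hA : ∀ i j, 0 ≤ A i j) : ∀ k i j, 0 ≤ (A ^ k) i j := by
  intro k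
  induction k with
  | zero => intro i j; simp [Matrix.one_apply]; positivity
  | succ k ih =>
      intro i j
      rw [pow_succ, Matrix.mul_apply]
      exact Finset.sum_nonneg fun e _ => mul_nonneg (ih i e) (hA e j)

lemma rm_colsum_succ (k : ℕ) (j : Fin n) :
    ∑ i, (A ^ (k + 1)) i j = ∑ e, (∑ i, (A ^ k) i e) * A e j := by
  simp only [pow_succ, Matrix.mul_apply]
  rw [Finset.sum_comm]
  simp [Finset.sum_mul]

lemma rm_colsum_le_one (hA : ∀ i j, 0 ≤ A i j) (hcol : ∀ e, ∑ i, A i e ≤ 1) :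
    ∀ k j, ∑ i, (A ^ k) i j ≤ 1 := by
  intro k
  induction k with
  | zero => intro j; simp [Matrix.one_apply]
  | succ k ih =>
      intro j
      rw [rm_colsum_succ]
      calc ∑ e, (∑ i, (A ^ k) i e) * A e j ≤ ∑ e, A e j := by
            refine Finset.sum_le_sum fun e _ => ?_
            calc (∑ i, (A ^ k) i e) * A e j ≤ 1 * A e j :=
                  mul_le_mul_of_nonneg_right (ih e) (hA e j)
              _ = A e j := one_mul _
        _ ≤ 1 := hcol j

lemma rm_colsum_antitone (hA : ∀ i j, 0 ≤ A i j) (hcol : ∀ e, ∑ i, A i e ≤ 1) (j : Fin n) :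
    Antitone fun k => ∑ i, (A ^ k) i j := by
  refine antitone_nat_of_succ_le fun k => ?_
  have : ∑ i, (A ^ (k + 1)) i j = ∑ e, (∑ i, A i e) * (A ^ k) e j := by
    simp only [pow_succ', Matrix.mul_apply]
    rw [Finset.sum_comm]
    simp [Finset.sum_mul]
  rw [this]
  refine Finset.sum_le_sum fun e _ => ?_
  calc (∑ i, A i e) * (A ^ k) e j ≤ 1 * (A ^ k) e j :=
        mul_le_mul_of_nonneg_right (hcol e) (rm_pow_nonneg A hA k e j)
    _ = (A ^ k) e j := one_mul _

lemma rm_propagate (hA : ∀ i j, 0 ≤ A i j) (hcol : ∀ e, ∑ i, A i e ≤ 1)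
    {k : ℕ} {e' e : Fin n} (hpos : 0 < A e' e) (hlt : ∑ i, (A ^ k) i e' < 1) :
    ∑ i, (A ^ (k + 1)) i e < 1 := by
  rw [rm_colsum_succ]
  have h1 : ∑ x, (∑ i, (A ^ k) i x) * A x e
      = (∑ i, (A ^ k) i e') * A e' e
        + ∑ x ∈ Finset.univ.erase e', (∑ i, (A ^ k) i x) * A x e :=
    (Finset.add_sum_erase _ _ (Finset.mem_univ e')).symm
  have h2 : A e' e + ∑ x ∈ Finset.univ.erase e', A x e = ∑ x, A x e :=
    Finset.add_sum_erase _ (fun x => A x e) (Finset.mem_univ e')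
  rw [h1]
  have hlt1 : (∑ i, (A ^ k) i e') * A e' e < A e' e := by
    nlinarith
  have hle2 : ∑ x ∈ Finset.univ.erase e', (∑ i, (A ^ k) i x) * A x e
      ≤ ∑ x ∈ Finset.univ.erase e', A x e := by
    refine Finset.sum_le_sum fun x _ => ?_
    calc (∑ i, (A ^ k) i x) * A x e ≤ 1 * A x e :=
          mul_le_mul_of_nonneg_right (rm_colsum_le_one A hA hcol k x) (hA x e)
      _ = A x e := one_mul _
  calc (∑ i, (A ^ k) i e') * A e' e
        + ∑ x ∈ Finset.univ.erase e', (∑ i, (A ^ k) i x) * A x e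
      < A e' e + ∑ x ∈ Finset.univ.erase e', A x e :=
        add_lt_add_of_lt_of_le hlt1 hle2
    _ = ∑ x, A x e := h2
    _ ≤ 1 := hcol e

lemma rm_reach (hA : ∀ i j, 0 ≤ A i j) (hcol : ∀ e, ∑ i, A i e ≤ 1)
    (hreach : ∀ j : Fin n, ∃ (r : ℕ) (e : ℕ → Fin n),
      e 0 = j ∧ (∀ m < r, 0 < A (e (m + 1)) (e m)) ∧ ∑ i, A i (e r) < 1) :
    ∀ j : Fin n, ∃ k, ∑ i, (A ^ k) i j < 1 := by
  intro j
  obtain ⟨r, e, he0, hpath, hend⟩ := hreach j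
  have key : ∀ d m, m + d = r → ∑ i, (A ^ (d + 1)) i (e m) < 1 := by
    intro d
    induction d with
    | zero =>
        intro m hm
        have hmr : m = r := by omega
        subst hmr
        simpa [pow_one] using hend
    | succ d ih =>
        intro m hm
        have h1 := ih (m + 1) (by omega)
        exact rm_propagate A hA hcol (hpath m (by omega)) h1
  exact ⟨r + 1, he0 ▸ key r 0 (by omega)⟩

end aux

/-- paper Assumption 1 ⇒ substochastic routing matrix is
Schur stable: a nonnegative matrix whose column sums are at most one, and such
that from every index there is a path (through strictly positive entries) to a
column with sum strictly less than one, has spectral radius strictly less than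
one; equivalently, every complex eigenvalue has modulus strictly less than
one. -/
theorem routing_matrix_spectral_radius_lt_one
    (n : ℕ) (A : Matrix (Fin n) (Fin n) ℝ)
    (hA : ∀ i j, 0 ≤ A i j)
    (hcol : ∀ e, ∑ i, A i e ≤ 1)
    (hreach : ∀ j : Fin n, ∃ (r : ℕ) (e : ℕ → Fin n),
      e 0 = j ∧ (∀ m < r, 0 < A (e (m + 1)) (e m)) ∧ ∑ i, A i (e r) < 1) :
    spectralRadius ℂ (A.map Complex.ofReal) < 1 ∧
    ∀ μ : ℂ, Module.End.HasEigenvalue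
        (Matrix.toLin' (A.map Complex.ofReal)) μ → ‖μ‖ < 1 := by
  obtain ⟨t, ht0, ht1, key⟩ : ∃ t : ℝ, 0 ≤ t ∧ t < 1 ∧
      ∀ μ : ℂ, Module.End.HasEigenvalue
        (Matrix.toLin' (A.map Complex.ofReal)) μ → ‖μ‖ ≤ t := by
    rcases Nat.eq_zero_or_pos n with hn | hn
    · refine ⟨0, le_refl _, one_pos, fun μ hμ => ?_⟩
      exfalso
      obtain ⟨v, hv⟩ := hμ.exists_hasEigenvector
      subst hn
      exact hv.2 (Subsingleton.elim v 0)
    · have : Nonempty (Fin n) := ⟨⟨0, hn⟩⟩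
      choose k hk using rm_reach A hA hcol hreach
      set N : ℕ := Finset.univ.sup k + 1 with hNdef
      have hN : ∀ j, ∑ i, (A ^ N) i j < 1 := fun j =>
        lt_of_le_of_lt
          (rm_colsum_antitone A hA hcol j
            (le_trans (Finset.le_sup (Finset.mem_univ j)) (Nat.le_succ _))) (hk j)
      set C : ℝ := Finset.univ.sup' Finset.univ_nonempty (fun j => ∑ i, (A ^ N) i j) with hCdef
      have hC1 : C < 1 := (Finset.sup'_lt_iff _).2 fun j _ => hN j
      obtain ⟨j0⟩ := ‹Nonempty (Fin n)›
      have hC0 : 0 ≤ C :=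
        le_trans (Finset.sum_nonneg fun i _ => rm_pow_nonneg A hA N i j0)
          (Finset.le_sup' (fun j => ∑ i, (A ^ N) i j) (Finset.mem_univ j0))
      have hCle : ∀ j, ∑ i, (A ^ N) i j ≤ C := fun j => Finset.le_sup' (fun j => ∑ i, (A ^ N) i j) (Finset.mem_univ j)
      refine ⟨C ^ ((N : ℝ)⁻¹), Real.rpow_nonneg hC0 _,
        Real.rpow_lt_one hC0 hC1 (by positivity), fun μ hμ => ?_⟩
      have htN : (C ^ ((N : ℝ)⁻¹)) ^ N = C := by
        rw [← Real.rpow_natCast (C ^ ((N : ℝ)⁻¹)) N, ← Real.rpow_mul hC0,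
          inv_mul_cancel₀ (by positivity : (N : ℝ) ≠ 0), Real.rpow_one]
      obtain ⟨v, hv⟩ := hμ.exists_hasEigenvector
      have hmv : Matrix.mulVec (A.map Complex.ofReal) v = μ • v := by
        have := Module.End.mem_eigenspace_iff.mp hv.1
        rwa [Matrix.toLin'_apply] at this
      have hpow : ∀ m : ℕ, Matrix.mulVec ((A ^ m).map Complex.ofReal) v = μ ^ m • v := by
        intro m
        induction m with
        | zero => simp [Matrix.map_one]
        | succ m ih =>
            have hmap : (A ^ (m + 1)).map Complex.ofReal
                = ((A ^ m).map Complex.ofReal) * (A.map Complex.ofReal) := by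
              rw [pow_succ]
              ext i j
              simp [Matrix.mul_apply, Matrix.map_apply]
            rw [hmap, ← Matrix.mulVec_mulVec, hmv, Matrix.mulVec_smul, ih, smul_smul,
              pow_succ, mul_comm]
      have hent : ∀ i, μ ^ N * v i = ∑ j, ((A ^ N) i j : ℂ) * v j := by
        intro i
        have := congrFun (hpow N) i
        simpa [Matrix.mulVec, dotProduct, Matrix.map_apply, Pi.smul_apply,
          smul_eq_mul] using this.symm
      set w : Fin n → ℝ := fun j => ‖v j‖ with hw
      have hwnn : ∀ j, 0 ≤ w j := fun j => norm_nonneg _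
      have hwi : ∀ i, ‖μ‖ ^ N * w i ≤ ∑ j, (A ^ N) i j * w j := by
        intro i
        calc ‖μ‖ ^ N * w i = ‖μ ^ N * v i‖ := by
              simp [hw, norm_mul, norm_pow]
          _ = ‖∑ j, ((A ^ N) i j : ℂ) * v j‖ := by rw [hent i]
          _ ≤ ∑ j, ‖((A ^ N) i j : ℂ) * v j‖ :=
              norm_sum_le _ _
          _ = ∑ j, (A ^ N) i j * w j := by
              refine Finset.sum_congr rfl fun j _ => ?_
              rw [norm_mul, Complex.norm_real, Real.norm_of_nonneg (rm_pow_nonneg A hA N i j)]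
      have hS : 0 < ∑ j, w j := by
        obtain ⟨i0, hi0⟩ := Function.ne_iff.mp hv.2
        exact Finset.sum_pos' (fun j _ => hwnn j)
          ⟨i0, Finset.mem_univ i0, by simpa [hw] using norm_pos_iff.mpr hi0⟩
      have hsum : ‖μ‖ ^ N * ∑ j, w j ≤ C * ∑ j, w j := by
        calc ‖μ‖ ^ N * ∑ j, w j = ∑ i, ‖μ‖ ^ N * w i := by
              rw [Finset.mul_sum]
          _ ≤ ∑ i, ∑ j, (A ^ N) i j * w j := Finset.sum_le_sum fun i _ => hwi i
          _ = ∑ j, (∑ i, (A ^ N) i j) * w j := by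
              rw [Finset.sum_comm]; simp [Finset.sum_mul]
          _ ≤ ∑ j, C * w j := Finset.sum_le_sum fun j _ =>
              mul_le_mul_of_nonneg_right (hCle j) (hwnn j)
          _ = C * ∑ j, w j := by rw [Finset.mul_sum]
      have hfin : ‖μ‖ ^ N ≤ (C ^ ((N : ℝ)⁻¹)) ^ N := by
        rw [htN]
        exact le_of_mul_le_mul_right hsum hS
      exact le_of_pow_le_pow_left₀ (by omega) (Real.rpow_nonneg hC0 _) hfin
  constructor
  · have hb : spectralRadius ℂ (A.map Complex.ofReal) ≤ ENNReal.ofReal t := by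
      rw [spectralRadius]
      refine iSup₂_le fun μ hμ => ?_
      have hμ' : μ ∈ spectrum ℂ (Matrix.toLinAlgEquiv' (A.map Complex.ofReal)) := by
        rwa [AlgEquiv.spectrum_eq]
      have heig : Module.End.HasEigenvalue
          (Matrix.toLin' (A.map Complex.ofReal)) μ :=
        Module.End.hasEigenvalue_iff_mem_spectrum.mpr hμ'
      rw [← ENNReal.ofReal_coe_nnreal, coe_nnnorm]
      exact ENNReal.ofReal_le_ofReal (key μ heig)
    exact lt_of_le_of_lt hb (ENNReal.ofReal_lt_one.2 ht1)
  · exact fun μ hμ => lt_of_le_of_lt (key μ hμ) ht1
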